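/- Let T ∈ ℤ^{m×n} be totally unimodular, B ∈ ℤ^{n×n} invertible with |det B| = Δ, and A = TB. Set Λ := B⁻¹ℤⁿ. Let I ⊆ [m] index rows of A such that ker A_I is one-dimensional, and let j ∉ I be such that the square matrix A_{I∪{j}} (with last row aⱼᵀ) is invertible. Then the vector r := A_{I∪{j}}⁻¹ eₙ lies in Λ, i.e., Br ∈ ℤⁿ. -/
import Mathlib


open Matrix

/-- Lemma 6, first claim: with `A = TB` strictly Δ-modular, `I` indexing rows of `A`
with one-dimensional kernel, and `j ∉ I` completing an invertible square submatrix
`A_{I ∪ {j}}` (with last row `aⱼ`), the vector `r = A_{I∪{j}}⁻¹ eₙ` lies in the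
lattice `Λ = B⁻¹ℤⁿ`, i.e. `B r` is integral.  Here `n = k + 1`. -/
theorem stmt10 {m k : ℕ} (T : Matrix (Fin m) (Fin (k + 1)) ℤ)
    (hT : T.IsTotallyUnimodular)
    (B : Matrix (Fin (k + 1)) (Fin (k + 1)) ℤ) (Δ : ℕ)
    (hB : B.det.natAbs = Δ) (hΔ : 0 < Δ)
    (A : Matrix (Fin m) (Fin (k + 1)) ℤ) (hA : A = T * B)
    (ρ : Fin (k + 1) → Fin m) (hρ : Function.Injective ρ)
    -- `ker A_I` is one-dimensional, where `I` indexes the first `k` rows `ρ` picks out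
    (hker : Module.finrank ℝ (LinearMap.ker
      (((A.submatrix (fun s : Fin k => ρ s.castSucc) id).map
        (Int.cast : ℤ → ℝ)).mulVecLin)) = 1)
    (M : Matrix (Fin (k + 1)) (Fin (k + 1)) ℝ)
    (hM : M = (A.submatrix ρ id).map (Int.cast : ℤ → ℝ))
    (hMinv : IsUnit M.det)
    (r : Fin (k + 1) → ℝ) (hr : r = M⁻¹.mulVec (Pi.single (Fin.last k) 1)) :
    ∀ i, ∃ z : ℤ, (B.map (Int.cast : ℤ → ℝ)).mulVec r i = (z : ℝ) := by
  set f : ℤ →+* ℝ := Int.castRingHom ℝ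
  -- the square submatrix of T
  set Tρ : Matrix (Fin (k + 1)) (Fin (k + 1)) ℤ := T.submatrix ρ id with hTρ
  have hf : ⇑f = (Int.cast : ℤ → ℝ) := rfl
  have hMne : M.det ≠ 0 := hMinv.ne_zero
  have hsub : A.submatrix ρ id = Tρ * B := by
    subst hA
    ext i j
    simp [Matrix.mul_apply, Tρ, Matrix.submatrix]
  have hMfact : M = Tρ.map f * B.map f := by
    rw [hM, hsub, ← hf, ← Matrix.map_mul]
  -- det Tρ is a unit in ℤ
  have hdetM : M.det = (Tρ.map f).det * (B.map f).det := by
    rw [hMfact, Matrix.det_mul]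
  have hTρdet : (Tρ.map f).det = (f Tρ.det) := (RingHom.map_det f Tρ).symm
  have hBdet : (B.map f).det = (f B.det) := (RingHom.map_det f B).symm
  have hTU : Tρ.det ∈ Set.range SignType.cast := hT (k + 1) ρ id hρ Function.injective_id
  have hTρne : (Tρ.det : ℝ) ≠ 0 := by
    intro h
    apply hMne
    rw [hdetM, hTρdet]
    simp only [f, Int.coe_castRingHom, h, zero_mul]
  have hTρunit : IsUnit Tρ.det := by
    obtain ⟨s, hs⟩ := hTU
    cases s with
    | zero => exfalso; apply hTρne; rw [← hs]; simp
    | pos => rw [← hs]; simp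
    | neg => rw [← hs]; exact ⟨-1, rfl⟩
  have hBne : IsUnit (B.map f).det := by
    have : (B.map f).det ≠ 0 := by
      intro h
      apply hMne
      rw [hdetM, h, mul_zero]
    exact isUnit_iff_ne_zero.mpr this
  have hTρℝunit : IsUnit (Tρ.map f).det := by
    rw [hTρdet]
    exact isUnit_iff_ne_zero.mpr hTρne
  -- inverse of Tρ over ℤ maps to inverse over ℝ
  have hTρinv : (Tρ.map f)⁻¹ = Tρ⁻¹.map f := by
    apply Matrix.inv_eq_right_inv
    rw [← Matrix.map_mul, Matrix.mul_nonsing_inv _ hTρunit]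
    simp
  -- B * M⁻¹ = Tρ⁻¹ over ℝ
  have hMinv' : M⁻¹ = (B.map f)⁻¹ * (Tρ.map f)⁻¹ := by
    rw [hMfact, Matrix.mul_inv_rev]
  have key : (B.map f) * M⁻¹ = Tρ⁻¹.map f := by
    rw [hMinv', ← Matrix.mul_assoc, Matrix.mul_nonsing_inv _ hBne, Matrix.one_mul, hTρinv]
  intro i
  refine ⟨Tρ⁻¹.mulVec (Pi.single (Fin.last k) 1) i, ?_⟩
  have : (B.map f).mulVec r = (Tρ⁻¹.map f).mulVec (Pi.single (Fin.last k) 1) := by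
    rw [hr, Matrix.mulVec_mulVec, key]
  rw [← hf, this]
  simp [Matrix.mulVec, dotProduct, Pi.single_apply, apply_ite]
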